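/- Let D be a commutative integral domain, s ∈ D^n with n ≥ 2, and suppose the minimal polynomial μ of the prefix s^(n−1) has degree L with Δ_n(μ) ≠ 0 and n − 2L > 0. Then LC(s) = n − L. -/
import Mathlib


open Polynomial Finset

/-- `f` is a (nonzero) annihilator of the finite sequence `s_1,…,s_n`:
`f_0 s_{j-d} + … + f_d s_j = 0` for all `d+1 ≤ j ≤ n`, where `d = deg f`. -/
def Annih (D : Type*) [CommRing D] (s : ℕ → D) (n : ℕ) (f : Polynomial D) : Prop :=
  f ≠ 0 ∧ ∀ j : ℕ, f.natDegree + 1 ≤ j → j ≤ n →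
    ∑ k ∈ Finset.range (f.natDegree + 1), f.coeff k * s (j - f.natDegree + k) = 0

/-- The linear complexity of `s_1,…,s_n`: minimal degree of a nonzero annihilator. -/
noncomputable def LC (D : Type*) [CommRing D] (s : ℕ → D) (n : ℕ) : ℕ :=
  sInf {d : ℕ | ∃ f : Polynomial D, Annih D s n f ∧ f.natDegree = d}

/-- The discrepancy `Δ_n(f) = Σ_{k=0}^{d} f_k s_{n-d+k}`. -/
def disc (D : Type*) [CommRing D] (s : ℕ → D) (n : ℕ) (f : Polynomial D) : D :=
  ∑ k ∈ Finset.range (f.natDegree + 1), f.coeff k * s (n - f.natDegree + k)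

lemma annih_X_pow {D : Type*} [CommRing D] [Nontrivial D] (s : ℕ → D) (n : ℕ) :
    Annih D s n (X ^ n : Polynomial D) := by
  refine ⟨(monic_X_pow n).ne_zero, fun j hj1 hj2 => absurd hj2 ?_⟩
  rw [natDegree_X_pow] at hj1; omega

lemma LC_le {D : Type*} [CommRing D] (s : ℕ → D) {n : ℕ} {f : Polynomial D}
    (hf : Annih D s n f) : LC D s n ≤ f.natDegree :=
  Nat.sInf_le ⟨f, hf, rfl⟩

lemma exists_LC {D : Type*} [CommRing D] [Nontrivial D] (s : ℕ → D) (n : ℕ) :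
    ∃ f, Annih D s n f ∧ f.natDegree = LC D s n :=
  Nat.sInf_mem (⟨n, ⟨X ^ n, annih_X_pow s n, natDegree_X_pow n⟩⟩ : Set.Nonempty {d : ℕ | ∃ f : Polynomial D, Annih D s n f ∧ f.natDegree = d})

lemma annih_mono {D : Type*} [CommRing D] (s : ℕ → D) {m m' : ℕ} (h : m ≤ m')
    {f : Polynomial D} (hf : Annih D s m' f) : Annih D s m f :=
  ⟨hf.1, fun j h1 h2 => hf.2 j h1 (h2.trans h)⟩

lemma LC_mono {D : Type*} [CommRing D] [Nontrivial D] (s : ℕ → D) {m m' : ℕ} (h : m ≤ m') :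
    LC D s m ≤ LC D s m' := by
  obtain ⟨f, hf, hdeg⟩ := exists_LC s m'
  exact hdeg ▸ LC_le s (annih_mono s h hf)

lemma sum_shift {D : Type*} [CommRing D] (s : ℕ → D) (c : D) (g : Polynomial D)
    (a R p : ℕ) (hR : g.natDegree + a ≤ R) :
    ∑ k ∈ Finset.range (R + 1), (C c * g * X ^ a).coeff k * s (p + k)
      = c * ∑ i ∈ Finset.range (g.natDegree + 1), g.coeff i * s (p + a + i) := by
  have key : ∀ k, (C c * g * X ^ a).coeff k = if a ≤ k then c * g.coeff (k - a) else 0 := by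
    intro k
    rw [coeff_mul_X_pow']
    split_ifs with h
    · rw [coeff_C_mul]
    · rfl
  calc ∑ k ∈ Finset.range (R + 1), (C c * g * X ^ a).coeff k * s (p + k)
      = ∑ k ∈ Finset.Ico a (g.natDegree + a + 1), (C c * g * X ^ a).coeff k * s (p + k) := by
        apply (Finset.sum_subset ?_ ?_).symm
        · intro x hx
          rw [Finset.mem_Ico] at hx; rw [Finset.mem_range]; omega
        · intro x hx hnx
          rw [Finset.mem_range] at hx
          rw [Finset.mem_Ico] at hnx
          rw [key]
          split_ifs with h
          · rw [coeff_eq_zero_of_natDegree_lt (by omega), mul_zero, zero_mul]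
          · rw [zero_mul]
    _ = ∑ i ∈ Finset.range (g.natDegree + a + 1 - a), (C c * g * X ^ a).coeff (a + i) * s (p + (a + i)) := by
        rw [Finset.sum_Ico_eq_sum_range]
    _ = c * ∑ i ∈ Finset.range (g.natDegree + 1), g.coeff i * s (p + a + i) := by
        rw [Finset.mul_sum]
        apply Finset.sum_congr (by congr 1; omega)
        intro i hi
        rw [key, if_pos (Nat.le_add_right a i), Nat.add_sub_cancel_left, ← add_assoc, mul_assoc]

lemma annih_lb {D : Type*} [CommRing D] [IsDomain D] (s : ℕ → D) {n : ℕ} {μ g : Polynomial D}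
    (hμ : Annih D s (n - 1) μ) (hΔ : disc D s n μ ≠ 0) (hg : Annih D s n g) :
    n ≤ g.natDegree + μ.natDegree := by
  by_contra hcon
  push_neg at hcon
  set L := μ.natDegree with hLdef
  set d := g.natDegree with hddef
  obtain ⟨c, rfl⟩ : ∃ c, n = L + d + 1 + c := ⟨n - (L + d + 1), by omega⟩
  have way1 :
      ∑ j ∈ Finset.range (d + 1), g.coeff j * ∑ k ∈ Finset.range (L + 1), μ.coeff k * s (1 + c + j + k)
        = g.coeff d * disc D s (L + d + 1 + c) μ := by
    rw [Finset.sum_range_succ]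
    have hz : ∑ j ∈ Finset.range d, g.coeff j * ∑ k ∈ Finset.range (L + 1), μ.coeff k * s (1 + c + j + k) = 0 := by
      apply Finset.sum_eq_zero
      intro j hj
      rw [Finset.mem_range] at hj
      have h0 := hμ.2 (L + (1 + c + j)) (by omega) (by omega)
      have h1 : ∑ k ∈ Finset.range (L + 1), μ.coeff k * s (1 + c + j + k)
          = ∑ k ∈ Finset.range (L + 1), μ.coeff k * s (L + (1 + c + j) - L + k) :=
        Finset.sum_congr rfl fun k _ => by congr 2; omega
      rw [h1, h0, mul_zero]
    rw [hz, zero_add]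
    congr 1
    show _ = disc D s (L + d + 1 + c) μ
    have h2 : disc D s (L + d + 1 + c) μ
        = ∑ k ∈ Finset.range (L + 1), μ.coeff k * s (L + d + 1 + c - L + k) := rfl
    rw [h2]
    exact Finset.sum_congr rfl fun k _ => by congr 2; omega
  have way2 :
      ∑ k ∈ Finset.range (L + 1), μ.coeff k * ∑ j ∈ Finset.range (d + 1), g.coeff j * s (1 + c + j + k) = 0 := by
    apply Finset.sum_eq_zero
    intro k hk
    rw [Finset.mem_range] at hk
    have h0 := hg.2 (d + (1 + c + k)) (by omega) (by omega)
    have h1 : ∑ j ∈ Finset.range (d + 1), g.coeff j * s (1 + c + j + k)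
        = ∑ j ∈ Finset.range (d + 1), g.coeff j * s (d + (1 + c + k) - d + j) :=
      Finset.sum_congr rfl fun j _ => by congr 2; omega
    rw [h1, h0, mul_zero]
  have hswap :
      ∑ j ∈ Finset.range (d + 1), g.coeff j * ∑ k ∈ Finset.range (L + 1), μ.coeff k * s (1 + c + j + k)
        = ∑ k ∈ Finset.range (L + 1), μ.coeff k * ∑ j ∈ Finset.range (d + 1), g.coeff j * s (1 + c + j + k) := by
    simp_rw [Finset.mul_sum]
    rw [Finset.sum_comm]
    exact Finset.sum_congr rfl fun k _ => Finset.sum_congr rfl fun j _ => by ring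
  have hzero : g.coeff d * disc D s (L + d + 1 + c) μ = 0 := by rw [← way1, hswap, way2]
  rcases mul_eq_zero.mp hzero with h | h
  · rw [hddef, ← Polynomial.leadingCoeff] at h
    exact hg.1 (leadingCoeff_eq_zero.mp h)
  · exact hΔ h

lemma exists_annih {D : Type*} [CommRing D] [IsDomain D] :
    ∀ (n : ℕ) (s : ℕ → D) (μ : Polynomial D),
      Annih D s (n - 1) μ →
      (∀ g, Annih D s (n - 1) g → μ.natDegree ≤ g.natDegree) →
      ∃ f, Annih D s n f ∧ f.natDegree = max μ.natDegree (n - μ.natDegree) := by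
  intro n
  induction n using Nat.strong_induction_on with
  | _ n ih =>
  intro s μ hann hmin
  by_cases hL0 : μ.natDegree = 0
  · refine ⟨X ^ n, annih_X_pow s n, ?_⟩
    rw [natDegree_X_pow, hL0, Nat.sub_zero]
    exact (Nat.zero_max n).symm
  · set L := μ.natDegree with hLdef
    have hL1 : 1 ≤ L := Nat.one_le_iff_ne_zero.mpr hL0
    have hone : Annih D s 0 (1 : Polynomial D) :=
      ⟨one_ne_zero, fun j h1 h2 => by rw [natDegree_one] at h1; omega⟩
    have hn2 : 2 ≤ n := by
      by_contra hn
      push_neg at hn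
      have h0 : n - 1 = 0 := by omega
      have := hmin 1 (h0 ▸ hone)
      rw [natDegree_one] at this; omega
    have hLC : LC D s (n - 1) = L := le_antisymm (LC_le s hann) (by
      obtain ⟨f, hf, hdeg⟩ := exists_LC s (n - 1)
      exact hdeg ▸ hmin f hf)
    have hLn : L ≤ n - 1 := by
      have := hmin (X ^ (n - 1)) (annih_X_pow s (n - 1))
      rwa [natDegree_X_pow] at this
    have hLC0 : LC D s 0 = 0 := by
      have := LC_le s hone
      rw [natDegree_one] at this
      omega
    set M := sInf {m : ℕ | L ≤ LC D s m} with hMdef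
    have hMne : (n - 1) ∈ {m : ℕ | L ≤ LC D s m} := hLC.ge
    have hM1 : L ≤ LC D s M := Nat.sInf_mem ⟨_, hMne⟩
    have hMle : M ≤ n - 1 := Nat.sInf_le hMne
    have hMpos : 1 ≤ M := by
      by_contra h
      push_neg at h
      interval_cases M
      · rw [hLC0] at hM1; omega
    set m := M - 1 with hmdef
    have hMm : M = m + 1 := by omega
    have hlt : LC D s m < L := by
      by_contra hc
      push_neg at hc
      have := Nat.sInf_le (show m ∈ {m | L ≤ LC D s m} from hc)
      omega
    set L'' := LC D s m with hL''def
    obtain ⟨μ', hμ', hμ'deg⟩ := exists_LC s m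
    rw [← hL''def] at hμ'deg
    have hLCm1 : LC D s (m + 1) = L := by
      rw [← hMm]
      exact le_antisymm ((LC_mono s hMle).trans hLC.le) hM1
    set Δ' := disc D s (m + 1) μ' with hΔ'def
    have hΔ' : Δ' ≠ 0 := by
      intro h0
      have hannm1 : Annih D s (m + 1) μ' := by
        refine ⟨hμ'.1, fun j h1 h2 => ?_⟩
        rcases Nat.lt_or_ge j (m + 1) with hj | hj
        · exact hμ'.2 j h1 (by omega)
        · have hjm : j = m + 1 := by omega
          subst hjm
          show disc D s (m + 1) μ' = 0
          rw [← hΔ'def]; exact h0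
      have := LC_le s hannm1
      rw [hLCm1, hμ'deg] at this
      omega
    have hμ'min : ∀ g, Annih D s (m + 1 - 1) g → μ'.natDegree ≤ g.natDegree := by
      intro g hg
      rw [Nat.add_sub_cancel] at hg
      rw [hμ'deg]
      exact LC_le s hg
    obtain ⟨h1poly, hh1, hh1deg⟩ :=
      ih (m + 1) (by omega) s μ' (by rwa [Nat.add_sub_cancel]) hμ'min
    obtain ⟨g0, hg0, hg0deg⟩ := exists_LC s (m + 1)
    have hlb : m + 1 ≤ g0.natDegree + μ'.natDegree :=
      annih_lb s (by rwa [Nat.add_sub_cancel]) (hΔ'def ▸ hΔ') hg0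
    have hub : L ≤ max L'' (m + 1 - L'') := by
      have h3 := LC_le s hh1
      rw [hLCm1, hh1deg, hμ'deg] at h3
      exact h3
    have hkey : L + L'' = m + 1 := by
      rcases le_max_iff.mp hub with h | h
      · omega
      · rw [hg0deg, hLCm1, hμ'deg] at hlb; omega
    -- construction
    set Δ := disc D s n μ with hΔdef
    set N := max L (n - L) with hNdef
    have hNL : L ≤ N := le_max_left _ _
    have hNnL : n - L ≤ N := le_max_right _ _
    have hNcase : N = L ∨ N = n - L := by rw [hNdef]; exact max_choice _ _
    set a := N - L with hadef
    set b := N - (n - L) with hbdef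
    set f := C Δ' * μ * X ^ a - C Δ * μ' * X ^ b with hfdef
    have hμne : μ ≠ 0 := hann.1
    have hdegA : (C Δ' * μ * X ^ a).natDegree = N := by
      rw [natDegree_mul (mul_ne_zero (C_ne_zero.mpr hΔ') hμne) (monic_X_pow a).ne_zero,
        natDegree_X_pow, natDegree_mul (C_ne_zero.mpr hΔ') hμne, natDegree_C, ← hLdef]
      omega
    have hbound : L'' + b < N := by
      rcases hNcase with h | h <;> omega
    have hdegB : (C Δ * μ' * X ^ b).natDegree < N := by
      by_cases hD : Δ = 0
      · rw [hD, map_zero, zero_mul, zero_mul, natDegree_zero]; omega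
      · rw [natDegree_mul (mul_ne_zero (C_ne_zero.mpr hD) hμ'.1) (monic_X_pow b).ne_zero,
          natDegree_X_pow, natDegree_mul (C_ne_zero.mpr hD) hμ'.1, natDegree_C, hμ'deg]
        omega
    have hdegf : f.natDegree = N := by
      rw [hfdef, natDegree_sub_eq_left_of_natDegree_lt (hdegA ▸ hdegB), hdegA]
    have hcoefμ : μ.coeff L ≠ 0 := by
      rw [hLdef, ← Polynomial.leadingCoeff]
      exact leadingCoeff_ne_zero.mpr hμne
    have hNa : N = L + a := by omega
    have hcoef : f.coeff N = Δ' * μ.coeff L := by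
      rw [hfdef, coeff_sub, coeff_eq_zero_of_natDegree_lt hdegB, sub_zero, hNa,
        coeff_mul_X_pow, coeff_C_mul]
    have hfne : f ≠ 0 := by
      intro h
      rw [h, coeff_zero] at hcoef
      exact mul_ne_zero hΔ' hcoefμ hcoef.symm
    refine ⟨f, ⟨hfne, ?_⟩, hdegf⟩
    intro j hj1 hj2
    rw [hdegf] at hj1 ⊢
    have hex : ∃ p, j = N + p ∧ 1 ≤ p := ⟨j - N, by omega, by omega⟩
    obtain ⟨p, hp, hp1⟩ := hex
    subst hp
    simp only [Nat.add_sub_cancel_left]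
    have hsplit : ∑ k ∈ Finset.range (N + 1), f.coeff k * s (p + k)
        = Δ' * ∑ i ∈ Finset.range (μ.natDegree + 1), μ.coeff i * s (p + a + i)
          - Δ * ∑ i ∈ Finset.range (μ'.natDegree + 1), μ'.coeff i * s (p + b + i) := by
      rw [← sum_shift s Δ' μ a N p (by omega), ← sum_shift s Δ μ' b N p (by rw [hμ'deg]; omega),
        ← Finset.sum_sub_distrib]
      exact Finset.sum_congr rfl fun k _ => by rw [hfdef, coeff_sub, sub_mul]
    rw [hsplit]
    by_cases hjn : N + p = n
    · have hμpart : ∑ i ∈ Finset.range (μ.natDegree + 1), μ.coeff i * s (p + a + i) = Δ := by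
        rw [hΔdef]
        have h2 : disc D s n μ
            = ∑ i ∈ Finset.range (μ.natDegree + 1), μ.coeff i * s (n - μ.natDegree + i) := rfl
        rw [h2]
        exact Finset.sum_congr rfl fun i _ => by congr 2; omega
      have hμ'part : ∑ i ∈ Finset.range (μ'.natDegree + 1), μ'.coeff i * s (p + b + i) = Δ' := by
        rw [hΔ'def]
        have h2 : disc D s (m + 1) μ'
            = ∑ i ∈ Finset.range (μ'.natDegree + 1), μ'.coeff i * s (m + 1 - μ'.natDegree + i) := rfl
        rw [h2]
        refine Finset.sum_congr rfl fun i _ => ?_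
        have : p + b = m + 1 - μ'.natDegree := by rw [hμ'deg]; omega
        rw [this]
      rw [hμpart, hμ'part]
      ring
    · have hμpart : ∑ i ∈ Finset.range (μ.natDegree + 1), μ.coeff i * s (p + a + i) = 0 := by
        have h0 := hann.2 (L + (p + a)) (by omega) (by omega)
        rw [← h0]
        refine Finset.sum_congr rfl fun i _ => ?_
        congr 2
        rw [← hLdef]
        omega
      have hμ'part : ∑ i ∈ Finset.range (μ'.natDegree + 1), μ'.coeff i * s (p + b + i) = 0 := by
        have h0 := hμ'.2 (μ'.natDegree + (p + b)) (by omega) (by rw [hμ'deg]; omega)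
        calc ∑ i ∈ Finset.range (μ'.natDegree + 1), μ'.coeff i * s (p + b + i)
            = ∑ i ∈ Finset.range (μ'.natDegree + 1), μ'.coeff i * s (μ'.natDegree + (p + b) - μ'.natDegree + i) :=
              Finset.sum_congr rfl fun i _ => by congr 2; omega
          _ = 0 := h0
      rw [hμpart, hμ'part]
      ring

theorem LC_jump (D : Type*) [CommRing D] [IsDomain D]
    (n : ℕ) (hn : 2 ≤ n) (s : ℕ → D) (μ : Polynomial D)
    (hann : Annih D s (n - 1) μ)
    (hmin : ∀ g, Annih D s (n - 1) g → μ.natDegree ≤ g.natDegree)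
    (hΔ : disc D s n μ ≠ 0)
    (hL : 2 * μ.natDegree < n) :
    LC D s n = n - μ.natDegree := by
  obtain ⟨f, hf, hfdeg⟩ := exists_annih n s μ hann hmin
  have hmax : max μ.natDegree (n - μ.natDegree) = n - μ.natDegree :=
    max_eq_right (by omega)
  rw [hmax] at hfdeg
  apply le_antisymm
  · exact hfdeg ▸ LC_le s hf
  · show n - μ.natDegree ≤ sInf {d : ℕ | ∃ g : Polynomial D, Annih D s n g ∧ g.natDegree = d}
    refine le_csInf ⟨f.natDegree, ⟨f, hf, rfl⟩⟩ ?_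
    rintro d ⟨g, hg, rfl⟩
    have := annih_lb s hann hΔ hg
    omega
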